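/- arXiv:1812.00316 — 2 statements merged into one kernel-verified Lean document; each statement's English description precedes it below -/
import Mathlib

section
/- For n ≥ 1, the n-th Maclaurin coefficient b_n of f_1(z) = exp(1/(1-z)) E_1(1/(1-z)) satisfies b_n = -∫_0^1 exp(-s/(1-s)) s^{n-1} ds. -/
open MeasureTheory Real Set Filter
open scoped NNReal ENNReal

/-- The exponential integral `E₁(x) = ∫_x^∞ e^{-t}/t dt`. -/
noncomputable def E1 (x : ℝ) : ℝ := ∫ t in Set.Ioi x, Real.exp (-t) / t


noncomputable def Jc (n : ℕ) : ℝ :=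
  ∫ s in Set.Ioo (0:ℝ) 1, Real.exp (-s / (1 - s)) * s ^ n / (1 - s)

noncomputable def cc : ℕ → ℝ
  | 0 => Jc 0
  | n + 1 => -∫ s in Set.Ioo (0:ℝ) 1, Real.exp (-s / (1 - s)) * s ^ n

lemma W_bound {s : ℝ} (hs : s ∈ Ioo (0:ℝ) 1) :
    Real.exp (-s / (1 - s)) / (1 - s) ≤ 1 := by
  obtain ⟨hs0, hs1⟩ := hs
  have h1 : 0 < 1 - s := by linarith
  have hu : 0 ≤ s / (1 - s) := div_nonneg hs0.le h1.le
  have hinv : (1 - s)⁻¹ = 1 + s / (1 - s) := by field_simp; ring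
  calc Real.exp (-s / (1 - s)) / (1 - s)
      = Real.exp (-(s / (1 - s))) * (1 + s / (1 - s)) := by
        rw [neg_div, div_eq_mul_inv, hinv]
    _ ≤ Real.exp (-(s / (1 - s))) * Real.exp (s / (1 - s)) := by
        nlinarith [Real.add_one_le_exp (s / (1 - s)), Real.exp_pos (-(s / (1 - s)))]
    _ = 1 := by rw [← Real.exp_add]; simp

lemma integOn {f : ℝ → ℝ} (hf : AEStronglyMeasurable f volume) {C : ℝ}
    (hC : ∀ s ∈ Ioo (0:ℝ) 1, ‖f s‖ ≤ C) : IntegrableOn f (Ioo (0:ℝ) 1) :=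
  Measure.integrableOn_of_bounded (by simp [Real.volume_Ioo]) hf
    ((ae_restrict_iff' measurableSet_Ioo).2 (ae_of_all _ hC))

lemma meas_base (n : ℕ) :
    AEStronglyMeasurable (fun s : ℝ => Real.exp (-s / (1 - s)) * s ^ n / (1 - s)) volume :=
  (((Real.measurable_exp.comp ((measurable_id.neg).div (measurable_const.sub measurable_id))).mul
    (measurable_id.pow_const n)).div (measurable_const.sub measurable_id)).aestronglyMeasurable

lemma meas_base2 (n : ℕ) :
    AEStronglyMeasurable (fun s : ℝ => Real.exp (-s / (1 - s)) * s ^ n) volume :=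
  ((Real.measurable_exp.comp ((measurable_id.neg).div (measurable_const.sub measurable_id))).mul
    (measurable_id.pow_const n)).aestronglyMeasurable

lemma base_bound {s : ℝ} (hs : s ∈ Ioo (0:ℝ) 1) (n : ℕ) :
    ‖Real.exp (-s / (1 - s)) * s ^ n / (1 - s)‖ ≤ 1 := by
  obtain ⟨hs0, hs1⟩ := hs
  have h1 : 0 < 1 - s := by linarith
  have hsn : s ^ n ≤ 1 := pow_le_one₀ hs0.le hs1.le
  have hnn : 0 ≤ Real.exp (-s / (1 - s)) * s ^ n / (1 - s) := by positivity
  rw [Real.norm_eq_abs, abs_of_nonneg hnn]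
  calc Real.exp (-s / (1 - s)) * s ^ n / (1 - s)
      ≤ Real.exp (-s / (1 - s)) * 1 / (1 - s) := by
        gcongr
    _ = Real.exp (-s / (1 - s)) / (1 - s) := by ring
    _ ≤ 1 := W_bound ⟨hs0, hs1⟩

lemma integ_base (n : ℕ) :
    IntegrableOn (fun s : ℝ => Real.exp (-s / (1 - s)) * s ^ n / (1 - s)) (Ioo (0:ℝ) 1) :=
  integOn (meas_base n) (fun s hs => base_bound hs n)

lemma integ_base2 (n : ℕ) :
    IntegrableOn (fun s : ℝ => Real.exp (-s / (1 - s)) * s ^ n) (Ioo (0:ℝ) 1) := by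
  apply integOn (meas_base2 n) (C := 1)
  intro s hs
  obtain ⟨hs0, hs1⟩ := hs
  have h1 : 0 < 1 - s := by linarith
  have : Real.exp (-s / (1 - s)) ≤ 1 := by
    rw [Real.exp_le_one_iff]
    rw [neg_div]
    simp only [Left.neg_nonpos_iff]
    positivity
  have hsn : s ^ n ≤ 1 := pow_le_one₀ hs0.le hs1.le
  rw [Real.norm_eq_abs, abs_of_nonneg (by positivity)]
  calc Real.exp (-s / (1 - s)) * s ^ n ≤ 1 * 1 := by
        apply mul_le_mul this hsn (by positivity) zero_le_one
    _ = 1 := by ring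

lemma ccdiff (n : ℕ) : cc (n + 1) = Jc (n + 1) - Jc n := by
  have h := integral_sub (integ_base (n+1)) (integ_base n)
  rw [cc, Jc, Jc, ← h]
  rw [← integral_neg]
  apply setIntegral_congr_fun measurableSet_Ioo
  intro s hs
  obtain ⟨hs0, hs1⟩ := hs
  have h1 : (1:ℝ) - s ≠ 0 := ne_of_gt (by linarith)
  field_simp [h1]
  ring

lemma cov (x : ℝ) (hx : |x| < 1) :
    Real.exp (1/(1-x)) * E1 (1/(1-x)) =
      ∫ s in Ioo (0:ℝ) 1, Real.exp (-s/(1-s)) * ((1-x) / ((1-s*x)*(1-s))) := by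
  obtain ⟨hxl, hxr⟩ := abs_lt.1 hx
  have hx1 : 0 < 1 - x := by linarith
  set a := 1/(1-x) with ha_def
  have ha : 0 < a := by positivity
  set f : ℝ → ℝ := fun s => a + s/(1-s) with hf_def
  have himg : f '' Ioo (0:ℝ) 1 = Ioi a := by
    ext t
    constructor
    · rintro ⟨s, ⟨hs0, hs1⟩, rfl⟩
      have h1 : 0 < 1 - s := by linarith
      have h2 : 0 < s/(1-s) := div_pos hs0 h1
      simp only [hf_def, mem_Ioi]; linarith
    · intro ht
      rw [mem_Ioi] at ht
      have hu : 0 < t - a := by linarith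
      have h1 : (0:ℝ) < 1 + (t-a) := by linarith
      refine ⟨(t-a)/(1+(t-a)), ⟨?_, ?_⟩, ?_⟩
      · positivity
      · rw [div_lt_one h1]; linarith
      · simp only [hf_def]
        rw [show (1:ℝ) - (t-a)/(1+(t-a)) = 1/(1+(t-a)) by field_simp; ring]
        rw [show (t-a)/(1+(t-a)) / (1/(1+(t-a))) = t - a by field_simp]
        ring
  have hinj : InjOn f (Ioo (0:ℝ) 1) := by
    rintro s1 ⟨h10, h11⟩ s2 ⟨h20, h21⟩ h
    have e1 : (1:ℝ) - s1 ≠ 0 := ne_of_gt (by linarith)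
    have e2 : (1:ℝ) - s2 ≠ 0 := ne_of_gt (by linarith)
    have h' : s1/(1-s1) = s2/(1-s2) := by
      have := h
      simp only [hf_def, add_right_inj] at this
      exact this
    field_simp at h'
    linarith
  have hderiv : ∀ s ∈ Ioo (0:ℝ) 1, HasDerivWithinAt f (((1-s)^2)⁻¹) (Ioo (0:ℝ) 1) s := by
    rintro s ⟨hs0, hs1⟩
    have e1 : (1:ℝ) - s ≠ 0 := ne_of_gt (by linarith)
    have h : HasDerivAt (fun y : ℝ => a + y/(1-y)) ((1*(1-s) - s*(0-1))/(1-s)^2) s :=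
      (HasDerivAt.div (hasDerivAt_id s) ((hasDerivAt_const s 1).sub (hasDerivAt_id s)) e1).const_add a
    have h2 : (1*(1-s) - s*(0-1))/(1-s)^2 = ((1-s)^2)⁻¹ := by
      rw [show 1*(1-s) - s*(0-1) = 1 by ring]
      exact one_div _
    rw [h2] at h
    exact h.hasDerivWithinAt
  have key := integral_image_eq_integral_abs_deriv_smul measurableSet_Ioo hderiv hinj
      (fun t => Real.exp (a - t)/t)
  rw [himg] at key
  have lhs_eq : (∫ t in Ioi a, Real.exp (a - t)/t) = Real.exp a * E1 a := by
    rw [E1, ← integral_const_mul]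
    congr 1
    funext t
    rw [Real.exp_sub, Real.exp_neg]
    ring
  rw [lhs_eq] at key
  rw [key]
  apply setIntegral_congr_fun measurableSet_Ioo
  rintro s ⟨hs0, hs1⟩
  have h1 : 0 < 1 - s := by linarith
  have e1 : (1:ℝ) - s ≠ 0 := ne_of_gt h1
  have h4 : s * x < 1 := by nlinarith [le_abs_self x]
  have e4 : (1:ℝ) - s*x ≠ 0 := ne_of_gt (by linarith)
  have hfs : f s = (1 - s*x)/((1-x)*(1-s)) := by
    simp only [hf_def, ha_def]
    field_simp
    ring
  have has : a - f s = -s/(1-s) := by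
    simp only [hf_def]
    rw [neg_div]
    ring
  show |((1-s)^2)⁻¹| • (Real.exp (a - f s)/f s) = _
  rw [smul_eq_mul, has, hfs, abs_of_nonneg (by positivity)]
  have ex : (1:ℝ) - x ≠ 0 := ne_of_gt hx1
  set R := Real.exp (-s/(1-s)) with hR
  rw [div_div_eq_mul_div]
  field_simp
  ring_nf
  rw [hR]; ring_nf

noncomputable def Bf (x : ℝ) : ℕ → ℝ
  | 0 => 0
  | n + 1 => x * (Jc n * x ^ n)

lemma hasSum_cc (x : ℝ) (hx : |x| < 1) :
    HasSum (fun n => cc n * x ^ n) (Real.exp (1/(1-x)) * E1 (1/(1-x))) := by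
  obtain ⟨hxl, hxr⟩ := abs_lt.1 hx
  have hx1 : 0 < 1 - x := by linarith
  set μ := volume.restrict (Ioo (0:ℝ) 1) with hμ
  set F : ℕ → ℝ → ℝ := fun n s => Real.exp (-s/(1-s)) * s^n / (1-s) * x^n with hF
  have hInt : ∀ n, Integrable (F n) μ := fun n => ((integ_base n).mul_const _)
  have hbound : ∀ n, ∀ s ∈ Ioo (0:ℝ) 1, ‖F n s‖ ≤ |x|^n := by
    intro n s hs
    simp only [hF]
    rw [norm_mul]
    calc ‖Real.exp (-s/(1-s)) * s^n/(1-s)‖ * ‖x^n‖ ≤ 1 * |x|^n := by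
          apply mul_le_mul (base_bound hs n) ?_ (norm_nonneg _) zero_le_one
          rw [Real.norm_eq_abs, abs_pow]
      _ = |x|^n := one_mul _
  have hNorm : ∀ n, (∫ s, ‖F n s‖ ∂μ) ≤ |x|^n := by
    intro n
    have h5 : (∫ s, ‖F n s‖ ∂μ) ≤ ∫ _, |x|^n ∂μ := by
      apply integral_mono_ae (hInt n).norm (integrable_const _)
      rw [hμ]
      exact (ae_restrict_iff' measurableSet_Ioo).2 (ae_of_all _ (hbound n))
    have h6 : (∫ _, |x|^n ∂μ) = |x|^n := by
      rw [integral_const]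
      rw [hμ]
      simp [Real.volume_Ioo]
    linarith
  have hSummable : Summable (fun n => ∫ s, ‖F n s‖ ∂μ) := by
    apply Summable.of_nonneg_of_le (fun n => integral_nonneg (fun s => norm_nonneg _)) hNorm
    exact summable_geometric_of_lt_one (abs_nonneg x) hx
  have hKey := hasSum_integral_of_summable_integral_norm hInt hSummable
  set T := ∫ s in Ioo (0:ℝ) 1, Real.exp (-s/(1-s)) / ((1-s)*(1-s*x)) with hT
  have hterm : ∀ n, (∫ s, F n s ∂μ) = Jc n * x^n := by
    intro n
    simp only [hF]
    rw [integral_mul_const]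
    rfl
  have htsum : (∫ s, (∑' n, F n s) ∂μ) = T := by
    rw [hμ, hT]
    apply setIntegral_congr_fun measurableSet_Ioo
    rintro s ⟨hs0, hs1⟩
    have h1 : 0 < 1 - s := by linarith
    have e1 : (1:ℝ) - s ≠ 0 := ne_of_gt h1
    have h4 : |s*x| < 1 := by
      rw [abs_mul, abs_of_nonneg hs0.le]
      nlinarith [abs_nonneg x]
    have e4 : (1:ℝ) - s*x ≠ 0 := by
      have := abs_lt.1 h4
      exact ne_of_gt (by linarith [this.2])
    calc (∑' n, F n s) = ∑' n, (Real.exp (-s/(1-s))/(1-s)) * (s*x)^n := by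
          apply tsum_congr
          intro n
          simp only [hF]
          rw [mul_pow]
          ring
      _ = (Real.exp (-s/(1-s))/(1-s)) * (1 - s*x)⁻¹ := by
          rw [tsum_mul_left, tsum_geometric_of_abs_lt_one h4]
      _ = Real.exp (-s/(1-s)) / ((1-s)*(1-s*x)) := by
          rw [← one_div, div_mul_div_comm, mul_one]
  rw [htsum] at hKey
  have hJ : HasSum (fun n => Jc n * x^n) T := by
    have := hKey
    simp only [hterm] at this
    exact this
  have h1 : HasSum (fun n => Bf x (n+1)) (x * T) := hJ.mul_left x
  have h2 : HasSum (Bf x) (x * T) := by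
    have := (hasSum_nat_add_iff 1).1 h1
    simpa [Bf] using this
  have h3 := hJ.sub h2
  have hfun : (fun n => Jc n * x^n - Bf x n) = fun n => cc n * x^n := by
    funext n
    cases n with
    | zero => simp [Bf, cc]
    | succ m =>
      rw [show Bf x (m+1) = x * (Jc m * x^m) from rfl,
        show cc (m+1) = Jc (m+1) - Jc m from ccdiff m, pow_succ]
      ring
  rw [hfun] at h3
  have hval : T - x*T = Real.exp (1/(1-x)) * E1 (1/(1-x)) := by
    rw [cov x hx]
    have heq : (∫ s in Ioo (0:ℝ) 1, Real.exp (-s/(1-s)) * ((1-x)/((1-s*x)*(1-s)))) = (1-x) * T := by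
      rw [hT, ← integral_const_mul]
      apply setIntegral_congr_fun measurableSet_Ioo
      rintro s ⟨hs0, hs1⟩
      have h1 : 0 < 1 - s := by linarith
      have e1 : (1:ℝ) - s ≠ 0 := ne_of_gt h1
      have h4 : s * x < 1 := by nlinarith [le_abs_self x]
      have e4 : (1:ℝ) - s*x ≠ 0 := ne_of_gt (by linarith)
      have ex : (1:ℝ) - x ≠ 0 := ne_of_gt hx1
      set R := Real.exp (-s/(1-s)) with hR
      field_simp
    rw [heq]
    ring
  rwa [hval] at h3

lemma coeff_unique (g : ℝ → ℝ) (b c : ℕ → ℝ)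
    (hb : ∀ x : ℝ, |x| < 1 → HasSum (fun n => b n * x ^ n) (g x))
    (hc : ∀ x : ℝ, |x| < 1 → HasSum (fun n => c n * x ^ n) (g x)) : b = c := by
  have key : ∀ d : ℕ → ℝ, (∀ x : ℝ, |x| < 1 → HasSum (fun n => d n * x ^ n) (g x)) →
      HasFPowerSeriesAt g (FormalMultilinearSeries.ofScalars ℝ d) 0 := by
    intro d hd
    have htend : Tendsto (fun n => d n * (1/2 : ℝ) ^ n) atTop (nhds 0) :=
      (hd (1/2) (by rw [abs_of_nonneg] <;> norm_num)).summable.tendsto_atTop_zero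
    refine ⟨(1/2 : ℝ≥0), ?_, ?_, ?_⟩
    · apply FormalMultilinearSeries.le_radius_of_isBigO
      have h1 : (fun n => d n * (1/2 : ℝ) ^ n) =O[atTop] (fun _ => (1:ℝ)) :=
        htend.isBigO_one ℝ
      refine h1.norm_left.congr' ?_ EventuallyEq.rfl
      filter_upwards with n
      rw [FormalMultilinearSeries.ofScalars_norm]
      push_cast
      simp [norm_mul, abs_of_nonneg]
    · norm_num
    · intro y hy
      have hy' : |y| < 1 := by
        rw [EMetric.mem_ball, edist_zero_right] at hy
        have h2 : ‖y‖₊ < (1/2 : ℝ≥0) := by exact_mod_cast hy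
        have h3 : (‖y‖ : ℝ) < 1/2 := h2
        calc |y| = ‖y‖ := rfl
          _ < 1/2 := h3
          _ < 1 := by norm_num
      simp only [FormalMultilinearSeries.ofScalars_apply_eq, smul_eq_mul, zero_add]
      exact hd y hy'
  exact FormalMultilinearSeries.ofScalars_series_injective ℝ ℝ
    ((key b hb).eq_formalMultilinearSeries (key c hc))


/-- For `n ≥ 1`, the `n`-th Maclaurin coefficient `bₙ` of
`f₁(z) = exp(1/(1-z)) E₁(1/(1-z))` satisfies `bₙ = -∫₀¹ exp(-s/(1-s)) s^{n-1} ds`. -/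
theorem stmt_5 (b : ℕ → ℝ)
    (hb : ∀ x : ℝ, |x| < 1 → HasSum (fun n => b n * x ^ n)
      (Real.exp (1 / (1 - x)) * E1 (1 / (1 - x)))) :
    ∀ n : ℕ, 1 ≤ n →
      b n = -∫ s in (0 : ℝ)..1, Real.exp (-s / (1 - s)) * s ^ (n - 1) := by
  have hbc : b = cc := by
    apply coeff_unique (fun x => Real.exp (1 / (1 - x)) * E1 (1 / (1 - x))) b cc
    · intro x hx
      simpa using hb x hx
    · intro x hx
      simpa using hasSum_cc x hx
  intro n hn
  obtain ⟨m, rfl⟩ : ∃ m, n = m + 1 := ⟨n - 1, (Nat.succ_pred_eq_of_pos hn).symm⟩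
  rw [hbc, show cc (m+1) = -∫ s in Set.Ioo (0:ℝ) 1, Real.exp (-s / (1 - s)) * s ^ m from rfl]
  rw [intervalIntegral.integral_of_le zero_le_one, integral_Ioc_eq_integral_Ioo]
  simp
end

section
/- The function f_1(z) = exp(1/(1-z)) E_1(1/(1-z)) satisfies the differential equation (1-z)^2 f_1'(z) - f_1(z) = z - 1 on the open unit disk. -/
open Set MeasureTheory intervalIntegral Real Filter Topology

lemma E1_integrableOn {a : ℝ} (ha : 0 < a) :
    IntegrableOn (fun t => Real.exp (-t) / t) (Ioi a) := by
  have hint : IntegrableOn (fun t : ℝ => Real.exp (-t) / a) (Ioi a) := by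
    have := (exp_neg_integrableOn_Ioi a (b := 1) one_pos).div_const a
    simpa [IntegrableOn] using this
  refine MeasureTheory.Integrable.mono hint ?_ ?_
  · refine (Measurable.aestronglyMeasurable ?_).restrict
    exact (Real.measurable_exp.comp measurable_neg).div measurable_id
  · filter_upwards [ae_restrict_mem measurableSet_Ioi] with t ht
    have hta : a < t := ht
    have htpos : 0 < t := ha.trans hta
    rw [Real.norm_eq_abs, Real.norm_eq_abs, abs_of_nonneg (by positivity),
      abs_of_nonneg (by positivity)]
    exact div_le_div_of_nonneg_left (Real.exp_pos _).le ha hta.le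

lemma E1_split {a b : ℝ} (ha : 0 < a) (hab : a ≤ b) :
    E1 a = (∫ t in a..b, Real.exp (-t) / t) + E1 b := by
  have hdisj : Disjoint (Ioc a b) (Ioi b) := by
    rw [Set.disjoint_left]; intro t ht ht'
    exact absurd (ht' : b < t) (not_lt.2 ht.2)
  rw [intervalIntegral.integral_of_le hab, E1, E1,
    ← setIntegral_union hdisj measurableSet_Ioi
      ((E1_integrableOn ha).mono_set Ioc_subset_Ioi_self)
      (E1_integrableOn (ha.trans_le hab)),
    Ioc_union_Ioi_eq_Ioi hab]

lemma E1_eq {x : ℝ} (hx : 0 < x) :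
    E1 x = E1 1 - ∫ t in (1:ℝ)..x, Real.exp (-t) / t := by
  rcases le_total x 1 with h | h
  · rw [E1_split hx h, intervalIntegral.integral_symm]; ring
  · rw [E1_split one_pos h]; ring

lemma E1_hasDerivAt {x : ℝ} (hx : 0 < x) :
    HasDerivAt E1 (-(Real.exp (-x) / x)) x := by
  have hcont : ContinuousAt (fun t => Real.exp (-t) / t) x :=
    ((Real.continuous_exp.comp continuous_neg).continuousAt).div continuousAt_id hx.ne'
  have hmeas : StronglyMeasurableAtFilter (fun t => Real.exp (-t) / t) (𝓝 x) :=
    ((Real.measurable_exp.comp measurable_neg).div measurable_id).stronglyMeasurable.stronglyMeasurableAtFilter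
  have hii : IntervalIntegrable (fun t => Real.exp (-t) / t) volume 1 x := by
    apply ContinuousOn.intervalIntegrable
    apply ContinuousOn.div
    · exact (Real.continuous_exp.comp continuous_neg).continuousOn
    · exact continuousOn_id
    · intro t ht
      rcases le_total 1 x with h | h
      · rw [uIcc_of_le h] at ht; linarith [ht.1]
      · rw [uIcc_of_ge h] at ht; linarith [ht.1, hx]
  have hder : HasDerivAt (fun y => ∫ t in (1:ℝ)..y, Real.exp (-t) / t)
      (Real.exp (-x) / x) x :=
    intervalIntegral.integral_hasDerivAt_right hii hmeas hcont
  have : HasDerivAt (fun y => E1 1 - ∫ t in (1:ℝ)..y, Real.exp (-t) / t)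
      (-(Real.exp (-x) / x)) x := (hder.const_sub (E1 1))
  refine this.congr_of_eventuallyEq ?_
  filter_upwards [eventually_gt_nhds hx] with y hy using E1_eq hy

/-- `f₁(z) = exp(1/(1-z)) E₁(1/(1-z))` satisfies `(1-z)² f₁'(z) - f₁(z) = z - 1`
on the open unit disk. -/
theorem stmt_8 :
    ∀ z : ℝ, |z| < 1 →
      (1 - z) ^ 2 * deriv (fun x => Real.exp (1 / (1 - x)) * E1 (1 / (1 - x))) z -
        Real.exp (1 / (1 - z)) * E1 (1 / (1 - z)) = z - 1 := by
  intro z hz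
  have hz1 : z < 1 := lt_of_abs_lt hz
  have h1z : (0:ℝ) < 1 - z := by linarith
  set g : ℝ := 1 / (1 - z) with hg
  have hgpos : 0 < g := by positivity
  have hgder : HasDerivAt (fun x : ℝ => 1 / (1 - x)) (1 / (1 - z) ^ 2) z := by
    have h := ((hasDerivAt_id z).const_sub 1).inv h1z.ne'
    have : HasDerivAt (fun x : ℝ => (1 - x)⁻¹) (1 / (1 - z)^2) z := by
      have e : - -1 / (1 - id z) ^ 2 = 1 / (1 - z) ^ 2 := by simp
      rw [e] at h
      exact h
    simpa [one_div] using this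
  have hexp : HasDerivAt (fun x : ℝ => Real.exp (1 / (1 - x)))
      (Real.exp g * (1 / (1 - z) ^ 2)) z := by
    have := (Real.hasDerivAt_exp g).comp z hgder; exact this
  have hE1 : HasDerivAt (fun x : ℝ => E1 (1 / (1 - x)))
      (-(Real.exp (-g) / g) * (1 / (1 - z) ^ 2)) z := by
    have := (E1_hasDerivAt hgpos).comp z hgder; exact this
  have hf : HasDerivAt (fun x => Real.exp (1 / (1 - x)) * E1 (1 / (1 - x)))
      (Real.exp g * (1 / (1 - z) ^ 2) * E1 g +
        Real.exp g * (-(Real.exp (-g) / g) * (1 / (1 - z) ^ 2))) z := hexp.mul hE1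
  rw [hf.deriv]
  have hginv' : g⁻¹ = 1 - z := by rw [hg]; simp [one_div]
  have hEF : Real.exp g * Real.exp (-g) = 1 := by rw [← Real.exp_add]; simp
  have hfg : Real.exp (-g) / g = Real.exp (-g) * (1 - z) := by
    rw [div_eq_mul_inv, hginv']
  rw [hfg]
  have expand : (1-z)^2 * (Real.exp g * (1/(1-z)^2) * E1 g +
      Real.exp g * (-(Real.exp (-g) * (1-z)) * (1/(1-z)^2))) =
      Real.exp g * E1 g - (Real.exp g * Real.exp (-g)) * (1-z) := by
    field_simp
    ring
  rw [expand, hEF]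
  ring
end
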